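/- Under Assumption 1, assume in addition K ∈ L^{4/3}(ℝ) and E(Y₁⁴) < ∞. Then for every η > 0 and every ψ ∈ L²(ℝ) with ‖ψ‖₂ ≤ 1, E[ ( Y₁·(K_η ∗ ψ)(X₁) )² ] ≤ ‖f‖_∞^{1/2}·‖K‖_{4/3}²·E(Y₁⁴)^{1/2}/√η. (The proof combines the Cauchy–Schwarz inequality with Young's convolution inequality ‖K_η ∗ ψ‖₄ ≤ ‖ψ‖₂·‖K_η‖_{4/3} and ‖K_η‖_{4/3} = η^{−1/4}‖K‖_{4/3}.) -/

import Mathlib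

open MeasureTheory ProbabilityTheory Real

noncomputable section

/-- Rescaled kernel `K_η(x) = (1/η) K(x/η)`. -/
def Kh (K : ℝ → ℝ) (h x : ℝ) : ℝ := (1 / h) * K (x / h)

/-- Convolution `(g ∗ k)(x) = ∫ g(x − y) k(y) dy`. -/
def conv (g k : ℝ → ℝ) (x : ℝ) : ℝ := ∫ y : ℝ, g (x - y) * k y

/-- Sup norm. -/
def supN (g : ℝ → ℝ) : ℝ := ⨆ x : ℝ, |g x|

/-- L^{4/3}(ℝ, dx) norm. -/
def norm43 (g : ℝ → ℝ) : ℝ := (∫ x : ℝ, |g x| ^ ((4 : ℝ) / 3)) ^ ((3 : ℝ) / 4)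

end

section aux
open MeasureTheory Real

lemma my_enorm_rpow (t : ℝ) {p : ℝ} (hp : 0 ≤ p) :
    (‖t‖₊ : ENNReal) ^ p = ENNReal.ofReal (|t| ^ p) := by
  rw [← enorm_eq_nnnorm, Real.enorm_eq_ofReal_abs, ENNReal.ofReal_rpow_of_nonneg (abs_nonneg t) hp]

lemma my_enorm_sq (t : ℝ) : ENNReal.ofReal (t ^ 2) = (‖t‖₊ : ENNReal) ^ (2 : ℝ) := by
  rw [my_enorm_rpow t (by norm_num : (0:ℝ) ≤ 2)]
  congr 1
  rw [show ((2:ℝ)) = ((2:ℕ):ℝ) by norm_num, Real.rpow_natCast, sq_abs]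

lemma my_enorm_pow4 (t : ℝ) : (‖t‖₊ : ENNReal) ^ (4 : ℝ) = ENNReal.ofReal (t ^ 4) := by
  rw [my_enorm_rpow t (by norm_num : (0:ℝ) ≤ 4)]
  congr 1
  rw [show ((4:ℝ)) = ((4:ℕ):ℝ) by norm_num, Real.rpow_natCast, pow_abs,
    abs_of_nonneg (by positivity)]

set_option linter.unnecessarySeqFocus false in
lemma my_young (k ψ : ℝ → ℝ) (hk : Measurable k) (hψ : Measurable ψ) :
    (∫⁻ x : ℝ, (‖conv k ψ x‖₊ : ENNReal) ^ (4 : ℝ)) ≤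
      (∫⁻ t : ℝ, (‖k t‖₊ : ENNReal) ^ ((4 : ℝ)/3)) ^ (3 : ℝ)
        * (∫⁻ y : ℝ, (‖ψ y‖₊ : ENNReal) ^ (2 : ℝ)) ^ (2 : ℝ) := by
  set Lk := ∫⁻ t : ℝ, (‖k t‖₊ : ENNReal) ^ ((4 : ℝ)/3) with hLk
  set Nψ := ∫⁻ y : ℝ, (‖ψ y‖₊ : ENNReal) ^ (2 : ℝ) with hNψ
  set T : ℝ → ENNReal := fun x =>
    ∫⁻ y : ℝ, (‖k (x - y)‖₊ : ENNReal) ^ ((4 : ℝ)/3) * (‖ψ y‖₊ : ENNReal) ^ (2 : ℝ) with hT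
  have hkm : Measurable fun t : ℝ => (‖k t‖₊ : ENNReal) ^ ((4:ℝ)/3) :=
    (hk.enorm).pow_const _
  have hψm : Measurable fun y : ℝ => (‖ψ y‖₊ : ENNReal) ^ (2:ℝ) :=
    (hψ.enorm).pow_const _
  have hprod : Measurable fun p : ℝ × ℝ =>
      (‖k (p.1 - p.2)‖₊ : ENNReal) ^ ((4:ℝ)/3) * (‖ψ p.2‖₊ : ENNReal) ^ (2:ℝ) :=
    ((hk.comp (measurable_fst.sub measurable_snd)).enorm.pow_const _).mul
      ((hψ.comp measurable_snd).enorm.pow_const _)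
  have hTm : Measurable T := hprod.lintegral_prod_right'
  have htrans : ∀ x : ℝ, (∫⁻ y : ℝ, (‖k (x - y)‖₊ : ENNReal) ^ ((4:ℝ)/3)) = Lk := fun x =>
    (Measure.measurePreserving_sub_left volume x).lintegral_comp hkm
  have htrans' : ∀ y : ℝ, (∫⁻ x : ℝ, (‖k (x - y)‖₊ : ENNReal) ^ ((4:ℝ)/3)) = Lk := fun y =>
    (measurePreserving_sub_right volume y).lintegral_comp hkm
  have hpt : ∀ x : ℝ, (‖conv k ψ x‖₊ : ENNReal) ≤
      T x ^ ((1:ℝ)/4) * (Lk ^ ((1:ℝ)/2) * Nψ ^ ((1:ℝ)/4)) := by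
    intro x
    have h0 : (‖conv k ψ x‖₊ : ENNReal) ≤ ∫⁻ y : ℝ, ‖k (x - y) * ψ y‖₊ :=
      enorm_integral_le_lintegral_enorm _
    set A : ℝ → ENNReal := fun y =>
      ((‖k (x - y)‖₊ : ENNReal) ^ ((4:ℝ)/3) * (‖ψ y‖₊ : ENNReal) ^ (2:ℝ)) ^ ((1:ℝ)/4) with hA
    set B : ℝ → ENNReal := fun y => (‖k (x - y)‖₊ : ENNReal) ^ ((2:ℝ)/3) with hB
    set C : ℝ → ENNReal := fun y => (‖ψ y‖₊ : ENNReal) ^ ((1:ℝ)/2) with hC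
    have hkm2 : Measurable fun y : ℝ => (‖k (x - y)‖₊ : ENNReal) :=
      ((hk.comp (measurable_const.sub measurable_id)).enorm)
    have hAm : Measurable A := ((hkm2.pow_const _).mul (hψ.enorm.pow_const _)).pow_const _
    have hBm : Measurable B := hkm2.pow_const _
    have hCm : Measurable C := hψ.enorm.pow_const _
    have hsplit : ∀ y : ℝ, (‖k (x - y) * ψ y‖₊ : ENNReal) = A y * (B y * C y) := by
      intro y
      have e1 : A y = (‖k (x - y)‖₊ : ENNReal) ^ ((1:ℝ)/3) * (‖ψ y‖₊ : ENNReal) ^ ((1:ℝ)/2) := by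
        simp only [hA]
        rw [ENNReal.mul_rpow_of_nonneg _ _ (by norm_num : (0:ℝ) ≤ 1/4),
          ← ENNReal.rpow_mul, ← ENNReal.rpow_mul]
        norm_num
      simp only [hB, hC]
      rw [e1, nnnorm_mul, ENNReal.coe_mul]
      rw [mul_mul_mul_comm, ← ENNReal.rpow_add_of_nonneg _ _ (by norm_num) (by norm_num),
        ← ENNReal.rpow_add_of_nonneg _ _ (by norm_num) (by norm_num)]
      norm_num
    rw [show (∫⁻ y : ℝ, (‖k (x - y) * ψ y‖₊ : ENNReal)) = ∫⁻ y, A y * (B y * C y) from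
      lintegral_congr fun y => hsplit y] at h0
    have hold1 : (∫⁻ y, A y * (B y * C y)) ≤
        (∫⁻ y, A y ^ (4:ℝ)) ^ ((1:ℝ)/4) * (∫⁻ y, (B y * C y) ^ ((4:ℝ)/3)) ^ ((3:ℝ)/4) := by
      have hpq : Real.HolderConjugate 4 (4/3) := ⟨by norm_num, by norm_num, by norm_num⟩
      have h2 := ENNReal.lintegral_mul_le_Lp_mul_Lq volume hpq hAm.aemeasurable
        (hBm.mul hCm).aemeasurable
      simp only [Pi.mul_apply] at h2
      convert h2 using 2 <;> norm_num
    have hA4 : (∫⁻ y, A y ^ (4:ℝ)) = T x := by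
      simp only [hT, hA]
      refine lintegral_congr fun y => ?_
      rw [← ENNReal.rpow_mul]
      norm_num
    have hold2 : (∫⁻ y, (B y * C y) ^ ((4:ℝ)/3)) ≤ Lk ^ ((2:ℝ)/3) * Nψ ^ ((1:ℝ)/3) := by
      have hpq : Real.HolderConjugate (3/2) 3 := ⟨by norm_num, by norm_num, by norm_num⟩
      have h1 : (∫⁻ y, (B y * C y) ^ ((4:ℝ)/3)) =
          ∫⁻ y, (B y ^ ((4:ℝ)/3)) * (C y ^ ((4:ℝ)/3)) :=
        lintegral_congr fun y => ENNReal.mul_rpow_of_nonneg _ _ (by norm_num)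
      have h2 := ENNReal.lintegral_mul_le_Lp_mul_Lq volume hpq
        ((hBm.pow_const ((4:ℝ)/3)).aemeasurable) ((hCm.pow_const ((4:ℝ)/3)).aemeasurable)
      simp only [Pi.mul_apply] at h2
      rw [h1]
      refine le_trans h2 ?_
      have e1 : (∫⁻ y, (B y ^ ((4:ℝ)/3)) ^ ((3:ℝ)/2)) = Lk := by
        rw [← htrans x]
        refine lintegral_congr fun y => ?_
        simp only [hB]
        rw [← ENNReal.rpow_mul, ← ENNReal.rpow_mul]
        norm_num
      have e2 : (∫⁻ y, (C y ^ ((4:ℝ)/3)) ^ (3:ℝ)) = Nψ := by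
        rw [hNψ]
        refine lintegral_congr fun y => ?_
        simp only [hC]
        rw [← ENNReal.rpow_mul, ← ENNReal.rpow_mul]
        norm_num
      rw [e1, e2]
      norm_num
    calc (‖conv k ψ x‖₊ : ENNReal) ≤ _ := h0
      _ ≤ _ := hold1
      _ ≤ T x ^ ((1:ℝ)/4) * (Lk ^ ((2:ℝ)/3) * Nψ ^ ((1:ℝ)/3)) ^ ((3:ℝ)/4) := by
          rw [hA4]
          exact mul_le_mul_right (ENNReal.rpow_le_rpow hold2 (by norm_num)) _
      _ = T x ^ ((1:ℝ)/4) * (Lk ^ ((1:ℝ)/2) * Nψ ^ ((1:ℝ)/4)) := by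
          rw [ENNReal.mul_rpow_of_nonneg _ _ (by norm_num : (0:ℝ) ≤ 3/4),
            ← ENNReal.rpow_mul, ← ENNReal.rpow_mul]
          norm_num
  have hpt4 : ∀ x : ℝ, (‖conv k ψ x‖₊ : ENNReal) ^ (4:ℝ) ≤ T x * (Lk ^ (2:ℝ) * Nψ) := by
    intro x
    calc (‖conv k ψ x‖₊ : ENNReal) ^ (4:ℝ)
        ≤ (T x ^ ((1:ℝ)/4) * (Lk ^ ((1:ℝ)/2) * Nψ ^ ((1:ℝ)/4))) ^ (4:ℝ) :=
          ENNReal.rpow_le_rpow (hpt x) (by norm_num)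
      _ = T x * (Lk ^ (2:ℝ) * Nψ) := by
          rw [ENNReal.mul_rpow_of_nonneg _ _ (by norm_num : (0:ℝ) ≤ 4),
            ENNReal.mul_rpow_of_nonneg _ _ (by norm_num : (0:ℝ) ≤ 4),
            ← ENNReal.rpow_mul, ← ENNReal.rpow_mul, ← ENNReal.rpow_mul]
          norm_num [ENNReal.rpow_one]
  have hTint : (∫⁻ x : ℝ, T x) = Lk * Nψ := by
    simp only [hT]
    rw [lintegral_lintegral_swap hprod.aemeasurable]
    have e : ∀ y : ℝ, (∫⁻ x : ℝ, (‖k (x - y)‖₊ : ENNReal) ^ ((4:ℝ)/3)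
        * (‖ψ y‖₊ : ENNReal) ^ (2:ℝ)) = Lk * (‖ψ y‖₊ : ENNReal) ^ (2:ℝ) := by
      intro y
      have hm : Measurable fun x : ℝ => (‖k (x - y)‖₊ : ENNReal) ^ ((4:ℝ)/3) :=
        (hk.comp (measurable_id.sub measurable_const)).enorm.pow_const _
      rw [lintegral_mul_const _ hm, htrans' y]
    rw [lintegral_congr e, lintegral_const_mul _ hψm]
  calc (∫⁻ x : ℝ, (‖conv k ψ x‖₊ : ENNReal) ^ (4 : ℝ))
      ≤ ∫⁻ x : ℝ, T x * (Lk ^ (2:ℝ) * Nψ) := lintegral_mono hpt4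
    _ = (Lk * Nψ) * (Lk ^ (2:ℝ) * Nψ) := by
        rw [lintegral_mul_const'' _ hTm.aemeasurable, hTint]
    _ = Lk ^ (3:ℝ) * Nψ ^ (2:ℝ) := by
        rw [show (3:ℝ) = ((3:ℕ):ℝ) by norm_num, show (2:ℝ) = ((2:ℕ):ℝ) by norm_num,
          ENNReal.rpow_natCast, ENNReal.rpow_natCast]
        norm_num
        ring

end aux

theorem stmt_16
    {Ω : Type*} [MeasurableSpace Ω] (μ : Measure Ω) [IsProbabilityMeasure μ]
    (X ε : Ω → ℝ) (b f K : ℝ → ℝ)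
    (hXmeas : Measurable X) (hεmeas : Measurable ε)
    (hbmeas : Measurable b) (hfmeas : Measurable f) (hKmeas : Measurable K)
    (hf0 : ∀ x, 0 ≤ f x)
    (hXlaw : Measure.map X μ
      = MeasureTheory.volume.withDensity (fun x => ENNReal.ofReal (f x)))
    (hεcent : ∫ ω, ε ω ∂μ = 0)
    (hindep : IndepFun X ε μ)
    -- Assumption 1
    (hKbdd : ∃ C, ∀ x, |K x| ≤ C)
    (hKL2 : Integrable (fun x : ℝ => (K x) ^ 2))
    (hKint : (∫ x : ℝ, K x) = 1)
    (hfbdd : ∃ C, ∀ x, f x ≤ C)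
    -- K ∈ L^{4/3}(ℝ)
    (hK43 : Integrable (fun x : ℝ => |K x| ^ ((4 : ℝ) / 3)))
    -- E(Y₁⁴) < ∞
    (hY4 : Integrable (fun ω => (b (X ω) + ε ω) ^ 4) μ) :
    ∀ η : ℝ, 0 < η → ∀ ψ : ℝ → ℝ, Measurable ψ →
      Integrable (fun x : ℝ => (ψ x) ^ 2) → (∫ x : ℝ, (ψ x) ^ 2) ≤ 1 →
      (∫ ω, ((b (X ω) + ε ω) * conv (Kh K η) ψ (X ω)) ^ 2 ∂μ)
        ≤ Real.sqrt (supN f) * (norm43 K) ^ 2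
            * Real.sqrt (∫ ω, (b (X ω) + ε ω) ^ 4 ∂μ) / Real.sqrt η := by
  intro η hη ψ hψm hψint hψle
  set Y : Ω → ℝ := fun ω => b (X ω) + ε ω with hY
  have hYm : Measurable Y := (hbmeas.comp hXmeas).add hεmeas
  set k : ℝ → ℝ := Kh K η with hk
  have hkm : Measurable k := by
    have : Measurable fun x : ℝ => (1 / η) * K (x / η) :=
      ((hKmeas.comp (measurable_id.div_const η)).const_mul _)
    exact this
  set g : ℝ → ℝ := conv k ψ with hg
  have hgm : Measurable g := by
    have hfm : StronglyMeasurable fun p : ℝ × ℝ => k (p.1 - p.2) * ψ p.2 :=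
      ((hkm.comp (measurable_fst.sub measurable_snd)).mul
        (hψm.comp measurable_snd)).stronglyMeasurable
    exact hfm.integral_prod_right'.measurable
  -- real constants
  set I : ℝ := ∫ x : ℝ, |K x| ^ ((4:ℝ)/3) with hIdef
  have hI0 : 0 ≤ I := integral_nonneg fun x => Real.rpow_nonneg (abs_nonneg _) _
  set S : ℝ := supN f with hSdef
  obtain ⟨Cf, hCf⟩ := hfbdd
  have hbdd : BddAbove (Set.range fun x : ℝ => |f x|) := by
    refine ⟨Cf, ?_⟩
    rintro _ ⟨x, rfl⟩
    show |f x| ≤ Cf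
    rw [abs_of_nonneg (hf0 x)]
    exact hCf x
  have hsup : ∀ x, f x ≤ S := fun x => by
    rw [hSdef, supN, show f x = |f x| from (abs_of_nonneg (hf0 x)).symm]
    exact le_ciSup hbdd x
  have hS0 : 0 ≤ S := le_trans (hf0 0) (hsup 0)
  set E4 : ℝ := ∫ ω, Y ω ^ 4 ∂μ with hE4def
  have hE40 : 0 ≤ E4 := integral_nonneg fun ω => by positivity
  set Nr : ℝ := ∫ x : ℝ, ψ x ^ 2 with hNrdef
  have hNr0 : 0 ≤ Nr := integral_nonneg fun x => sq_nonneg _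
  -- lintegral quantities
  set Lk : ENNReal := ∫⁻ t : ℝ, (‖k t‖₊ : ENNReal) ^ ((4:ℝ)/3) with hLkdef
  set Nψ : ENNReal := ∫⁻ y : ℝ, (‖ψ y‖₊ : ENNReal) ^ (2:ℝ) with hNψdef
  set c : ℝ := (1/η) ^ ((4:ℝ)/3) * (η * I) with hcdef
  have hc0 : 0 ≤ c := by positivity
  -- value of Lk
  have hLk : Lk = ENNReal.ofReal c := by
    have e1 : ∀ t : ℝ, (‖k t‖₊ : ENNReal) ^ ((4:ℝ)/3)
        = ENNReal.ofReal ((1/η) ^ ((4:ℝ)/3)) * ENNReal.ofReal (|K (t/η)| ^ ((4:ℝ)/3)) := by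
      intro t
      rw [my_enorm_rpow _ (by norm_num : (0:ℝ) ≤ 4/3)]
      rw [hk, Kh, abs_mul, Real.mul_rpow (abs_nonneg _) (abs_nonneg _),
        abs_of_pos (by positivity : (0:ℝ) < 1/η),
        ENNReal.ofReal_mul (by positivity)]
    have hKm43 : Measurable fun u : ℝ => ENNReal.ofReal (|K u| ^ ((4:ℝ)/3)) := by
      fun_prop
    have hscale : (∫⁻ t : ℝ, ENNReal.ofReal (|K (t/η)| ^ ((4:ℝ)/3)))
        = ENNReal.ofReal η * ∫⁻ u : ℝ, ENNReal.ofReal (|K u| ^ ((4:ℝ)/3)) := by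
      have h1 : (fun t : ℝ => ENNReal.ofReal (|K (t/η)| ^ ((4:ℝ)/3)))
          = fun t : ℝ => ENNReal.ofReal (|K (η⁻¹ * t)| ^ ((4:ℝ)/3)) := by
        funext t; rw [div_eq_inv_mul]
      rw [h1, ← lintegral_map hKm43 (measurable_const_mul η⁻¹),
        Real.map_volume_mul_left (inv_ne_zero hη.ne'), lintegral_smul_measure, smul_eq_mul,
        inv_inv, abs_of_pos hη]
    have hIof : (∫⁻ u : ℝ, ENNReal.ofReal (|K u| ^ ((4:ℝ)/3))) = ENNReal.ofReal I := by
      rw [hIdef]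
      exact (ofReal_integral_eq_lintegral_ofReal hK43
        (Filter.Eventually.of_forall fun x => Real.rpow_nonneg (abs_nonneg _) _)).symm
    rw [hLkdef, lintegral_congr e1, lintegral_const_mul _ (by fun_prop), hscale, hIof,
      ← ENNReal.ofReal_mul (by positivity), ← ENNReal.ofReal_mul (by positivity), hcdef]
  -- value of Nψ
  have hNψ : Nψ = ENNReal.ofReal Nr := by
    rw [hNψdef, show (∫⁻ y : ℝ, (‖ψ y‖₊ : ENNReal) ^ (2:ℝ))
        = ∫⁻ y : ℝ, ENNReal.ofReal (ψ y ^ 2) from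
      lintegral_congr fun y => (my_enorm_sq (ψ y)).symm, hNrdef]
    exact (ofReal_integral_eq_lintegral_ofReal hψint
      (Filter.Eventually.of_forall fun x => sq_nonneg _)).symm
  have hNψle : Nψ ≤ 1 := by
    rw [hNψ]
    calc ENNReal.ofReal Nr ≤ ENNReal.ofReal 1 := ENNReal.ofReal_le_ofReal hψle
      _ = 1 := by simp
  -- fourth moment of Y
  have hEL : (∫⁻ ω, (‖Y ω‖₊ : ENNReal) ^ (4:ℝ) ∂μ) = ENNReal.ofReal E4 := by
    rw [lintegral_congr fun ω => my_enorm_pow4 (Y ω), hE4def]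
    exact (ofReal_integral_eq_lintegral_ofReal hY4
      (Filter.Eventually.of_forall fun ω => by positivity)).symm
  -- fourth moment of g(X)
  have hGL : (∫⁻ ω, (‖g (X ω)‖₊ : ENNReal) ^ (4:ℝ) ∂μ) ≤ ENNReal.ofReal (S * c ^ (3:ℝ)) := by
    have hgm4 : Measurable fun x : ℝ => (‖g x‖₊ : ENNReal) ^ (4:ℝ) := hgm.enorm.pow_const _
    have hyoung := my_young k ψ hkm hψm
    calc (∫⁻ ω, (‖g (X ω)‖₊ : ENNReal) ^ (4:ℝ) ∂μ)
        = ∫⁻ x, (‖g x‖₊ : ENNReal) ^ (4:ℝ) ∂(Measure.map X μ) :=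
          (lintegral_map hgm4 hXmeas).symm
      _ = ∫⁻ x : ℝ, ENNReal.ofReal (f x) * (‖g x‖₊ : ENNReal) ^ (4:ℝ) := by
          rw [hXlaw, lintegral_withDensity_eq_lintegral_mul volume
            (hfmeas.ennreal_ofReal) hgm4]
          rfl
      _ ≤ ∫⁻ x : ℝ, ENNReal.ofReal S * (‖g x‖₊ : ENNReal) ^ (4:ℝ) :=
          lintegral_mono fun x => mul_le_mul_left (ENNReal.ofReal_le_ofReal (hsup x)) _
      _ = ENNReal.ofReal S * ∫⁻ x : ℝ, (‖g x‖₊ : ENNReal) ^ (4:ℝ) :=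
          lintegral_const_mul _ hgm4
      _ ≤ ENNReal.ofReal S * (Lk ^ (3:ℝ) * Nψ ^ (2:ℝ)) := mul_le_mul_right hyoung _
      _ ≤ ENNReal.ofReal S * (ENNReal.ofReal (c ^ (3:ℝ)) * 1) := by
          refine mul_le_mul_right (mul_le_mul ?_ ?_ zero_le zero_le) _
          · exact le_of_eq (by rw [hLk, ENNReal.ofReal_rpow_of_nonneg hc0 (by norm_num)])
          · exact ENNReal.rpow_le_one hNψle (by norm_num)
      _ = ENNReal.ofReal (S * c ^ (3:ℝ)) := by rw [mul_one, ← ENNReal.ofReal_mul hS0]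
  -- Cauchy-Schwarz over μ
  have hmF : Measurable fun ω => (‖Y ω‖₊ : ENNReal) ^ (2:ℝ) := hYm.enorm.pow_const _
  have hmG : Measurable fun ω => (‖g (X ω)‖₊ : ENNReal) ^ (2:ℝ) :=
    (hgm.comp hXmeas).enorm.pow_const _
  have hCS : (∫⁻ ω, ENNReal.ofReal ((Y ω * g (X ω)) ^ 2) ∂μ)
      ≤ (ENNReal.ofReal E4) ^ ((1:ℝ)/2) * (ENNReal.ofReal (S * c ^ (3:ℝ))) ^ ((1:ℝ)/2) := by
    have e0 : (∫⁻ ω, ENNReal.ofReal ((Y ω * g (X ω)) ^ 2) ∂μ)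
        = ∫⁻ ω, ((‖Y ω‖₊ : ENNReal) ^ (2:ℝ)) * ((‖g (X ω)‖₊ : ENNReal) ^ (2:ℝ)) ∂μ :=
      lintegral_congr fun ω => by
        rw [mul_pow, ENNReal.ofReal_mul (sq_nonneg _), my_enorm_sq, my_enorm_sq]
    have hpq : Real.HolderConjugate 2 2 := ⟨by norm_num, by norm_num, by norm_num⟩
    have h2 := ENNReal.lintegral_mul_le_Lp_mul_Lq μ hpq hmF.aemeasurable hmG.aemeasurable
    simp only [Pi.mul_apply] at h2
    rw [e0]
    refine le_trans h2 ?_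
    have eF : (∫⁻ ω, ((‖Y ω‖₊ : ENNReal) ^ (2:ℝ)) ^ (2:ℝ) ∂μ) = ENNReal.ofReal E4 := by
      rw [← hEL]
      exact lintegral_congr fun ω => by rw [← ENNReal.rpow_mul]; norm_num
    have eG : (∫⁻ ω, ((‖g (X ω)‖₊ : ENNReal) ^ (2:ℝ)) ^ (2:ℝ) ∂μ)
        = ∫⁻ ω, (‖g (X ω)‖₊ : ENNReal) ^ (4:ℝ) ∂μ :=
      lintegral_congr fun ω => by rw [← ENNReal.rpow_mul]; norm_num
    rw [eF, eG]
    exact mul_le_mul_right (ENNReal.rpow_le_rpow hGL (by norm_num)) _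
  have hfinal : (∫⁻ ω, ENNReal.ofReal ((Y ω * g (X ω)) ^ 2) ∂μ)
      ≤ ENNReal.ofReal (Real.sqrt E4 * Real.sqrt (S * c ^ (3:ℝ))) := by
    refine le_trans hCS (le_of_eq ?_)
    rw [ENNReal.ofReal_rpow_of_nonneg hE40 (by norm_num),
      ENNReal.ofReal_rpow_of_nonneg (by positivity) (by norm_num),
      ← ENNReal.ofReal_mul (by positivity), ← Real.sqrt_eq_rpow, ← Real.sqrt_eq_rpow]
  -- real algebra
  have h1 : c ^ (3:ℝ) = (1/η) * I ^ 3 := by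
    rw [hcdef, Real.mul_rpow (by positivity) (by positivity),
      Real.mul_rpow hη.le hI0, ← Real.rpow_mul (by positivity)]
    rw [show (4:ℝ)/3*3 = ((4:ℕ):ℝ) by norm_num, Real.rpow_natCast,
      show (3:ℝ) = ((3:ℕ):ℝ) by norm_num, Real.rpow_natCast, Real.rpow_natCast]
    field_simp
  have h2 : Real.sqrt (S * c ^ (3:ℝ)) = Real.sqrt S * (I ^ ((3:ℝ)/4)) ^ 2 / Real.sqrt η := by
    have e1 : (I ^ ((3:ℝ)/4)) ^ 2 = I ^ ((3:ℝ)/2) := by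
      rw [← Real.rpow_natCast (I ^ ((3:ℝ)/4)) 2, ← Real.rpow_mul hI0]
      norm_num
    have e2 : Real.sqrt (I ^ 3) = I ^ ((3:ℝ)/2) := by
      rw [Real.sqrt_eq_rpow, ← Real.rpow_natCast I 3, ← Real.rpow_mul hI0]
      norm_num
    rw [h1, show S * (1/η * I ^ 3) = S * I ^ 3 * (1/η) by ring,
      Real.sqrt_mul (by positivity), Real.sqrt_mul hS0, e2, e1, one_div, Real.sqrt_inv]
    field_simp
  have hnorm : norm43 K = I ^ ((3:ℝ)/4) := by
    rw [norm43, ← hIdef]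
  -- conversion to Bochner integral
  have heq : (∫ ω, (Y ω * g (X ω)) ^ 2 ∂μ)
      = (∫⁻ ω, ENNReal.ofReal ((Y ω * g (X ω)) ^ 2) ∂μ).toReal := by
    have hmeas2 : AEStronglyMeasurable (fun ω => (Y ω * g (X ω)) ^ 2) μ :=
      ((hYm.mul ((hgm.comp hXmeas) : Measurable fun ω => g (X ω))).pow_const
        2).aestronglyMeasurable
    rw [integral_eq_lintegral_of_nonneg_ae
      (Filter.Eventually.of_forall fun ω => sq_nonneg _) hmeas2]
  show (∫ ω, (Y ω * g (X ω)) ^ 2 ∂μ)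
      ≤ Real.sqrt S * norm43 K ^ 2 * Real.sqrt E4 / Real.sqrt η
  calc (∫ ω, (Y ω * g (X ω)) ^ 2 ∂μ)
      = (∫⁻ ω, ENNReal.ofReal ((Y ω * g (X ω)) ^ 2) ∂μ).toReal := heq
    _ ≤ (ENNReal.ofReal (Real.sqrt E4 * Real.sqrt (S * c ^ (3:ℝ)))).toReal :=
        ENNReal.toReal_mono ENNReal.ofReal_ne_top hfinal
    _ = Real.sqrt E4 * Real.sqrt (S * c ^ (3:ℝ)) := ENNReal.toReal_ofReal (by positivity)
    _ = Real.sqrt S * norm43 K ^ 2 * Real.sqrt E4 / Real.sqrt η := by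
        rw [h2, hnorm]
        ring
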